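/- Let N ∈ ℕ with N ≥ 2, let J ∈ Matrix (Fin N) (Fin N) ℂ be the all-ones matrix, and let L := N·I − J (the Laplacian of the unweighted complete graph on N vertices). Let ℓ₁ be the first row of L and 𝟙ℓ₁ the rank-one matrix with every row equal to ℓ₁. Then for every x ∈ ℂ^N with first coordinate x₁ = 0, (I + (1/N)·(𝟙ℓ₁ − L))·x = 0. In particular, for the gain choice K = N, the closed-loop error dynamics x⁺ = (I + (1/K)(𝟙ℓ₁ − L))·x on the subspace {x₁ = 0} reach the origin in exactly one time-step (deadbeat synchronization). -/

import Mathlib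

open Matrix

/-- Deadbeat synchronization: for the complete-graph Laplacian `L = N·I − J` and gain
choice `K = N`, the closed-loop matrix `I + (1/N)(𝟙ℓ₁ − L)` annihilates every vector in
the subspace `{x : x₁ = 0}`, i.e. the error dynamics reach the origin in one step. -/
theorem stmt_10 (N : ℕ) (hN : 2 ≤ N)
    (J L : Matrix (Fin N) (Fin N) ℂ)
    (hJ : J = Matrix.of (fun _ _ => (1 : ℂ)))
    (hL : L = (N : ℂ) • (1 : Matrix (Fin N) (Fin N) ℂ) - J) :
    ∀ x : Fin N → ℂ, x ⟨0, by omega⟩ = 0 →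
      ((1 : Matrix (Fin N) (Fin N) ℂ) +
          (1 / (N : ℂ)) • (Matrix.of (fun _ j => L ⟨0, by omega⟩ j) - L)) *ᵥ x = 0 := by
  intro x hx
  have hN0 : (N : ℂ) ≠ 0 := Nat.cast_ne_zero.mpr (by omega)
  have hM : ((1 : Matrix (Fin N) (Fin N) ℂ) +
      (1 / (N : ℂ)) • (Matrix.of (fun _ j => L ⟨0, by omega⟩ j) - L))
      = Matrix.of (fun _ j => if j = (⟨0, by omega⟩ : Fin N) then (1 : ℂ) else 0) := by
    subst hL hJ
    ext i j
    simp only [Matrix.add_apply, Matrix.smul_apply, Matrix.sub_apply, Matrix.of_apply,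
      Matrix.one_apply, smul_eq_mul]
    by_cases h0 : j = (⟨0, by omega⟩ : Fin N) <;> by_cases hij : i = j <;>
      simp [h0, hij, hN0] <;>
        first
        | exact fun h => absurd h.symm h0
        | (field_simp <;> exact fun h => absurd h.symm h0)
        | (subst h0; simp [hij, hN0])
        | (rw [if_neg (Ne.symm h0)]; simp [hN0])
  rw [hM]
  funext i
  show (∑ j, _ * x j) = 0
  simp [Matrix.of_apply, hx]
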